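/- arXiv:0903.0610 — 3 statements merged into one kernel-verified Lean document; each statement's English description precedes it below -/
import Mathlib

section
/- Let W and V be finite dimensional normed linear spaces with dim W = dim V, and let L : V → W' be a linear operator (W' the dual of W). If inf_{v ∈ V, ‖v‖_V = 1} sup_{w ∈ W, ‖w‖_W = 1} ⟨Lv, w⟩ = γ > 0, then L is invertible, and for every f ∈ W', the unique solution u of Lu = f satisfies ‖u‖_V ≤ (1/γ) ‖f‖_{W'}. -/
lemma infsup_key
    (V W : Type*) [NormedAddCommGroup V] [NormedSpace ℝ V]
    [NormedAddCommGroup W] [NormedSpace ℝ W]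
    (L : V →ₗ[ℝ] StrongDual ℝ W) (γ : ℝ) (hγ : 0 < γ)
    (hinfsup : (⨅ v : {v : V // ‖v‖ = 1}, ⨆ w : {w : W // ‖w‖ = 1},
      L v.1 w.1) = γ) :
    ∀ v : V, γ * ‖v‖ ≤ ‖L v‖ := by
  intro v
  rcases eq_or_ne v 0 with rfl | hv
  · simp
  · have hvn : ‖v‖ ≠ 0 := norm_ne_zero_iff.mpr hv
    set v' : V := ‖v‖⁻¹ • v with hv'
    have hv'1 : ‖v'‖ = 1 := by
      rw [hv', norm_smul, norm_inv, norm_norm, inv_mul_cancel₀ hvn]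
    -- each sup is bounded below by 0 (details unneeded; we bound via ‖L v'‖)
    have hbdd : BddBelow (Set.range fun v : {v : V // ‖v‖ = 1} =>
        ⨆ w : {w : W // ‖w‖ = 1}, L v.1 w.1) := by
      refine ⟨0, ?_⟩
      rintro x ⟨u, rfl⟩
      by_cases hW : Nonempty {w : W // ‖w‖ = 1}
      · obtain ⟨w⟩ := hW
        have hA : BddAbove (Set.range fun w : {w : W // ‖w‖ = 1} => L u.1 w.1) := by
          refine ⟨‖L u.1‖, ?_⟩
          rintro x ⟨w, rfl⟩
          calc L u.1 w.1 ≤ ‖L u.1 w.1‖ := le_abs_self _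
          _ ≤ ‖L u.1‖ * ‖w.1‖ := (L u.1).le_opNorm w.1
          _ = ‖L u.1‖ := by rw [w.2, mul_one]
        have h1 : L u.1 w.1 ≤ ⨆ w : {w : W // ‖w‖ = 1}, L u.1 w.1 := le_ciSup hA w
        have h2 : L u.1 (-w.1) ≤ ⨆ w : {w : W // ‖w‖ = 1}, L u.1 w.1 :=
          le_ciSup hA ⟨-w.1, by rw [norm_neg]; exact w.2⟩
        rw [map_neg] at h2
        linarith
      · haveI := not_nonempty_iff.mp hW
        show (0:ℝ) ≤ ⨆ w : {w : W // ‖w‖ = 1}, L u.1 w.1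
        rw [iSup_of_empty', Real.sSup_empty]
    have h1 : γ ≤ ⨆ w : {w : W // ‖w‖ = 1}, L v' w.1 := by
      rw [← hinfsup]
      exact ciInf_le hbdd ⟨v', hv'1⟩
    have h2 : (⨆ w : {w : W // ‖w‖ = 1}, L v' w.1) ≤ ‖L v'‖ := by
      by_cases hW : Nonempty {w : W // ‖w‖ = 1}
      · refine ciSup_le fun w => ?_
        calc L v' w.1 ≤ ‖L v' w.1‖ := le_abs_self _
        _ ≤ ‖L v'‖ * ‖w.1‖ := (L v').le_opNorm w.1
        _ = ‖L v'‖ := by rw [w.2, mul_one]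
      · haveI := not_nonempty_iff.mp hW
        rw [iSup_of_empty', Real.sSup_empty]
        exact norm_nonneg _
    have h3 : γ ≤ ‖L v'‖ := h1.trans h2
    have h4 : ‖L v'‖ = ‖v‖⁻¹ * ‖L v‖ := by
      rw [hv', map_smul, norm_smul, norm_inv, norm_norm]
    rw [h4] at h3
    have := mul_le_mul_of_nonneg_right h3 (norm_nonneg v)
    rwa [inv_mul_eq_div, div_mul_cancel₀ _ hvn] at this

/-- Inf-sup condition: if `L : V → W'` between finite-dimensional normed spaces of
equal dimension satisfies `inf_{‖v‖=1} sup_{‖w‖=1} ⟨Lv, w⟩ = γ > 0`, then `L` is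
invertible and the solution of `Lu = f` satisfies `‖u‖ ≤ γ⁻¹ ‖f‖`. -/
theorem infsup_stability
    (V W : Type*) [NormedAddCommGroup V] [NormedSpace ℝ V]
    [NormedAddCommGroup W] [NormedSpace ℝ W]
    [FiniteDimensional ℝ V] [FiniteDimensional ℝ W]
    (hdim : Module.finrank ℝ W = Module.finrank ℝ V)
    (L : V →ₗ[ℝ] StrongDual ℝ W) (γ : ℝ) (hγ : 0 < γ)
    (hinfsup : (⨅ v : {v : V // ‖v‖ = 1}, ⨆ w : {w : W // ‖w‖ = 1},
      L v.1 w.1) = γ) :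
    Function.Bijective L ∧
      ∀ f : StrongDual ℝ W, ∀ u : V, L u = f → ‖u‖ ≤ (1/γ) * ‖f‖ := by
  have key := infsup_key V W L γ hγ hinfsup
  have hinj : Function.Injective L := by
    rw [← LinearMap.ker_eq_bot, LinearMap.ker_eq_bot']
    intro v hv
    have := key v
    rw [hv, norm_zero] at this
    have : ‖v‖ ≤ 0 := by nlinarith [norm_nonneg v]
    exact norm_le_zero_iff.mp this
  have hrank : Module.finrank ℝ V = Module.finrank ℝ (StrongDual ℝ W) := by
    have e : (W →ₗ[ℝ] ℝ) ≃ₗ[ℝ] StrongDual ℝ W :=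
      LinearMap.toContinuousLinearMap
    rw [← e.finrank_eq, Subspace.dual_finrank_eq, hdim]
  refine ⟨⟨hinj, (LinearMap.injective_iff_surjective_of_finrank_eq_finrank hrank).mp hinj⟩,
    fun f u hu => ?_⟩
  have := key u
  rw [hu] at this
  rw [one_div, ← div_eq_inv_mul, le_div_iff₀ hγ]
  nlinarith [this]
end

section
/- For the choice η defined by η_p = 1/(2ε), η_q = −1/(2ε), and η_i = 0 otherwise, where ξ_p = max_j ξ_j and ξ_q = min_j ξ_j for a nonzero mean-zero vector ξ, one has η ∈ R^{2N}_*, ‖η‖_{ℓ^1_ε} = 1, and 2⟨Aξ, η⟩ ≥ γ(|ξ_p| + |ξ_q|), under the diagonal dominance hypothesis min_i (A_{ii} + Σ_{j≠i} min(0,A_{ij})) − max_i Σ_{j≠i} max(0,A_{ij}) = γ > 0. -/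
private lemma sum_pair_ite {S : Finset ℤ} {p q : ℤ} (hp : p ∈ S) (hq : q ∈ S)
    (hpq : p ≠ q) (a b : ℝ) :
    ∑ j ∈ S, (if j = p then a else if j = q then b else 0) = a + b := by
  rw [← Finset.add_sum_erase S _ hp]
  simp only [if_pos rfl]
  congr 1
  have hcongr : ∀ j ∈ S.erase p, (if j = p then a else if j = q then b else 0)
      = if j = q then b else 0 := fun j hj => if_neg (Finset.mem_erase.mp hj).1
  rw [Finset.sum_congr rfl hcongr, Finset.sum_ite_eq' (S.erase p) q (fun _ => b),
    if_pos (Finset.mem_erase.mpr ⟨hpq.symm, hq⟩)]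

/-- The explicit choice `η_p = 1/(2ε)`, `η_q = -1/(2ε)`, `η_i = 0` otherwise, where
`ξ_p = max ξ` and `ξ_q = min ξ`, is mean-zero, has `‖η‖_{ℓ¹_ε} = 1`, and satisfies
`2⟨Aξ, η⟩ ≥ γ(|ξ_p| + |ξ_q|)` under the diagonal dominance hypothesis. -/
theorem rdd_explicit_eta (N : ℤ) (hN : 1 ≤ N) (A : ℤ → ℤ → ℝ) (γ : ℝ) (hγ : 0 < γ)
    (hne : (Finset.Icc (-N+1) N).Nonempty)
    (hA : (Finset.Icc (-N+1) N).inf' hne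
        (fun i => A i i + ∑ j ∈ (Finset.Icc (-N+1) N).erase i, min 0 (A i j))
      - (Finset.Icc (-N+1) N).sup' hne
        (fun i => ∑ j ∈ (Finset.Icc (-N+1) N).erase i, max 0 (A i j)) = γ)
    (ξ : ℤ → ℝ) (hsum : (∑ j ∈ Finset.Icc (-N+1) N, ξ j) = 0)
    (hξne : ∃ j ∈ Finset.Icc (-N+1) N, ξ j ≠ 0)
    (p q : ℤ) (hp : p ∈ Finset.Icc (-N+1) N) (hq : q ∈ Finset.Icc (-N+1) N)
    (hmax : ξ p = (Finset.Icc (-N+1) N).sup' hne ξ)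
    (hmin : ξ q = (Finset.Icc (-N+1) N).inf' hne ξ)
    (η : ℤ → ℝ)
    (hη : η = fun i => if i = p then (N:ℝ)/2 else if i = q then -(N:ℝ)/2 else 0) :
    (∑ j ∈ Finset.Icc (-N+1) N, η j) = 0 ∧
    (1/(N:ℝ)) * ∑ j ∈ Finset.Icc (-N+1) N, |η j| = 1 ∧
    γ * (|ξ p| + |ξ q|) ≤
      2 * ((1/(N:ℝ)) * ∑ i ∈ Finset.Icc (-N+1) N,
        (∑ j ∈ Finset.Icc (-N+1) N, A i j * ξ j) * η i) := by
  set S := Finset.Icc (-N+1 : ℤ) N with hSdef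
  have hNR : (1:ℝ) ≤ (N:ℝ) := by exact_mod_cast hN
  have hN0 : (N:ℝ) ≠ 0 := by linarith
  have hub : ∀ j ∈ S, ξ j ≤ ξ p := fun j hj => hmax ▸ Finset.le_sup' ξ hj
  have hlb : ∀ j ∈ S, ξ q ≤ ξ j := fun j hj => hmin ▸ Finset.inf'_le ξ hj
  obtain ⟨j0, hj0, hj0ne⟩ := hξne
  have hξp : 0 < ξ p := by
    by_contra h
    push_neg at h
    have hall := (Finset.sum_eq_zero_iff_of_nonpos (fun j hj => (hub j hj).trans h)).mp hsum
    exact hj0ne (hall j0 hj0)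
  have hξq : ξ q < 0 := by
    by_contra h
    push_neg at h
    have hall := (Finset.sum_eq_zero_iff_of_nonneg (fun j hj => h.trans (hlb j hj))).mp hsum
    exact hj0ne (hall j0 hj0)
  have hpq : p ≠ q := fun h => by rw [h] at hξp; linarith
  have hηj : ∀ j, η j = if j = p then (N:ℝ)/2 else if j = q then -(N:ℝ)/2 else 0 :=
    fun j => by rw [hη]
  refine ⟨?_, ?_, ?_⟩
  · rw [Finset.sum_congr rfl (fun j _ => hηj j), sum_pair_ite hp hq hpq]
    ring
  · have habs : ∀ j, |η j| = if j = p then (N:ℝ)/2 else if j = q then (N:ℝ)/2 else 0 := by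
      intro j
      rw [hηj j]
      split_ifs
      · exact abs_of_nonneg (by linarith)
      · rw [abs_of_nonpos (by linarith)]; ring
      · exact abs_zero
    rw [Finset.sum_congr rfl (fun j _ => habs j), sum_pair_ite hp hq hpq]
    field_simp
    norm_num
  · set g : ℤ → ℝ := fun i => ∑ j ∈ S, A i j * ξ j with hg
    have hsum3 : ∑ i ∈ S, g i * η i = g p * ((N:ℝ)/2) + g q * (-(N:ℝ)/2) := by
      rw [Finset.sum_congr rfl (fun i _ => ?_), sum_pair_ite hp hq hpq]
      rw [hηj i]
      split_ifs with h1 h2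
      · rw [h1]
      · rw [h2]
      · ring
    set m := S.inf' hne (fun i => A i i + ∑ j ∈ S.erase i, min 0 (A i j)) with hm
    set M := S.sup' hne (fun i => ∑ j ∈ S.erase i, max 0 (A i j)) with hM
    have hgp : m * ξ p + M * ξ q ≤ g p := by
      have h1 : ∀ j ∈ S.erase p, min 0 (A p j) * ξ p + max 0 (A p j) * ξ q ≤ A p j * ξ j := by
        intro j hj
        have hjS := (Finset.mem_erase.mp hj).2
        rcases le_or_gt 0 (A p j) with h | h
        · rw [min_eq_left h, max_eq_right h]
          simpa using mul_le_mul_of_nonneg_left (hlb j hjS) h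
        · rw [min_eq_right h.le, max_eq_left h.le]
          simpa using mul_le_mul_of_nonpos_left (hub j hjS) h.le
      have h2 : (∑ j ∈ S.erase p, min 0 (A p j)) * ξ p
          + (∑ j ∈ S.erase p, max 0 (A p j)) * ξ q ≤ ∑ j ∈ S.erase p, A p j * ξ j := by
        rw [Finset.sum_mul, Finset.sum_mul, ← Finset.sum_add_distrib]
        exact Finset.sum_le_sum h1
      have hmle := Finset.inf'_le (fun i => A i i + ∑ j ∈ S.erase i, min 0 (A i j)) hp
      have hMge := Finset.le_sup' (fun i => ∑ j ∈ S.erase i, max 0 (A i j)) hp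
      have e1 := mul_le_mul_of_nonneg_right hmle hξp.le
      rw [add_mul] at e1
      have e2 := mul_le_mul_of_nonpos_right hMge hξq.le
      have hgps : g p = A p p * ξ p + ∑ j ∈ S.erase p, A p j * ξ j :=
        (Finset.add_sum_erase S _ hp).symm
      rw [hgps]
      linarith
    have hgq : g q ≤ m * ξ q + M * ξ p := by
      have h1 : ∀ j ∈ S.erase q, A q j * ξ j ≤ min 0 (A q j) * ξ q + max 0 (A q j) * ξ p := by
        intro j hj
        have hjS := (Finset.mem_erase.mp hj).2
        rcases le_or_gt 0 (A q j) with h | h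
        · rw [min_eq_left h, max_eq_right h]
          simpa using mul_le_mul_of_nonneg_left (hub j hjS) h
        · rw [min_eq_right h.le, max_eq_left h.le]
          simpa using mul_le_mul_of_nonpos_left (hlb j hjS) h.le
      have h2 : ∑ j ∈ S.erase q, A q j * ξ j ≤ (∑ j ∈ S.erase q, min 0 (A q j)) * ξ q
          + (∑ j ∈ S.erase q, max 0 (A q j)) * ξ p := by
        rw [Finset.sum_mul, Finset.sum_mul, ← Finset.sum_add_distrib]
        exact Finset.sum_le_sum h1
      have hmle := Finset.inf'_le (fun i => A i i + ∑ j ∈ S.erase i, min 0 (A i j)) hq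
      have hMge := Finset.le_sup' (fun i => ∑ j ∈ S.erase i, max 0 (A i j)) hq
      have e1 := mul_le_mul_of_nonpos_right hmle hξq.le
      rw [add_mul] at e1
      have e2 := mul_le_mul_of_nonneg_right hMge hξp.le
      have hgqs : g q = A q q * ξ q + ∑ j ∈ S.erase q, A q j * ξ j :=
        (Finset.add_sum_erase S _ hq).symm
      rw [hgqs]
      linarith
    have hrhs : 2 * ((1/(N:ℝ)) * ∑ i ∈ S, g i * η i) = g p - g q := by
      rw [hsum3]; field_simp; ring
    rw [hrhs, abs_of_pos hξp, abs_of_neg hξq]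
    have key : γ * (ξ p + -ξ q) = m * ξ p + M * ξ q - (m * ξ q + M * ξ p) := by
      rw [← hA]; ring
    linarith
end

section
/- Let L_2 be defined on v ∈ R^{2N+1} by (L_2 v)_j = 4ε^{-2}(−v_{j+1} + 2v_j − v_{j-1}) for j ∈ C and (L_2 v)_j = ε^{-2}(−v_{j+2} + 2v_j − v_{j-2}) for j ∈ A. Then for all v ∈ R^{2N+1} and all w ∈ R^{2N+1} with w_{-N} = w_N = 0: ε Σ_{j=-N+1}^{N-1} (L_2 v)_j w_j = Σ_{j=-N+1}^{-K} ε·4 Dv_j Dw_j + Σ_{j=-K+1}^{K} ε (Dv_{j-1} + 2Dv_j + Dv_{j+1}) Dw_j + Σ_{j=K+1}^{N} ε·4 Dv_j Dw_j + ε^2 (D^3 v)_{-K+1} w_{-K} − ε^2 (D^3 v)_{K+2} w_K. -/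
/-- Lattice spacing `ε = 1/N`. -/
noncomputable def eps (N : ℤ) : ℝ := 1 / (N : ℝ)

/-- Backward difference `Dv_j = (v_j - v_{j-1})/ε`. -/
noncomputable def Dd (N : ℤ) (v : ℤ → ℝ) (j : ℤ) : ℝ := (v j - v (j-1)) / eps N

/-- Third backward difference `D³v_j = ε⁻²(Dv_j - 2Dv_{j-1} + Dv_{j-2})`. -/
noncomputable def D3 (N : ℤ) (v : ℤ → ℝ) (j : ℤ) : ℝ :=
  (Dd N v j - 2 * Dd N v (j-1) + Dd N v (j-2)) / (eps N)^2

/-- Next-nearest neighbor QCF operator: atomistic stencil on `A = {-K,…,K}`,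
continuum (local) stencil elsewhere. -/
noncomputable def L2op (N K : ℤ) (v : ℤ → ℝ) (j : ℤ) : ℝ :=
  if -K ≤ j ∧ j ≤ K then (-v (j+2) + 2 * v j - v (j-2)) / (eps N)^2
  else 4 * (-v (j+1) + 2 * v j - v (j-1)) / (eps N)^2

open Finset in
private lemma sum_Icc_top' (f : ℤ → ℝ) {a b : ℤ} (h : a ≤ b) :
    ∑ j ∈ Finset.Icc a b, f j = f b + ∑ j ∈ Finset.Icc a (b-1), f j := by
  rw [show Finset.Icc a b = insert b (Finset.Icc a (b-1)) by
        ext x; simp only [mem_Icc, mem_insert]; omega,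
      Finset.sum_insert (by simp [Finset.mem_Icc])]

open Finset in
private lemma sum_Icc_bot' (f : ℤ → ℝ) {a b : ℤ} (h : a ≤ b) :
    ∑ j ∈ Finset.Icc a b, f j = f a + ∑ j ∈ Finset.Icc (a+1) b, f j := by
  rw [show Finset.Icc a b = insert a (Finset.Icc (a+1) b) by
        ext x; simp only [mem_Icc, mem_insert]; omega,
      Finset.sum_insert (by simp [Finset.mem_Icc])]

open Finset in
private lemma sum_split' (f : ℤ → ℝ) {a b c : ℤ} (h1 : a - 1 ≤ b) (h2 : b ≤ c) :
    ∑ j ∈ Finset.Icc a c, f j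
      = (∑ j ∈ Finset.Icc a b, f j) + ∑ j ∈ Finset.Icc (b+1) c, f j := by
  rw [← Finset.sum_union (by
      rw [Finset.disjoint_left]; intro x hx hx'
      simp only [mem_Icc] at hx hx'; omega)]
  congr 1; ext x; simp only [mem_Icc, mem_union]; omega

private lemma abel' (f w : ℤ → ℝ) (a b : ℤ) (hab : a ≤ b) :
    ∑ j ∈ Finset.Icc a b, f j * (w j - w (j-1)) =
      (∑ j ∈ Finset.Icc a (b-1), (f j - f (j+1)) * w j) + f b * w b - f a * w (a-1) := by
  refine Int.le_induction (motive := fun b _ =>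
      ∑ j ∈ Finset.Icc a b, f j * (w j - w (j-1)) =
      (∑ j ∈ Finset.Icc a (b-1), (f j - f (j+1)) * w j) + f b * w b - f a * w (a-1))
    ?_ ?_ b hab
  · show _ = _
    rw [Finset.Icc_self, Finset.sum_singleton, Finset.Icc_eq_empty (by omega),
      Finset.sum_empty]
    ring
  · intro b hb ih
    show _ = _
    rw [sum_Icc_top' _ (by omega : a ≤ b + 1), show b + 1 - 1 = b from by ring, ih,
      sum_Icc_top' (fun j => (f j - f (j+1)) * w j) hb]
    ring


set_option maxHeartbeats 4000000 in
private lemma keyid (N K : ℤ) (hN : 1 ≤ N) (hK0 : 0 < K) (hKN : K < N - 1)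
    (v w : ℤ → ℝ) (hwL : w (-N) = 0) (hwR : w N = 0) :
    ∑ j ∈ Finset.Icc (-N+1) (N-1),
      (if -K ≤ j ∧ j ≤ K then -v (j+2) + 2*v j - v (j-2)
       else 4*(-v (j+1) + 2*v j - v (j-1))) * w j =
      (∑ j ∈ Finset.Icc (-N+1) (-K), 4*(v j - v (j-1)) * (w j - w (j-1)))
      + (∑ j ∈ Finset.Icc (-K+1) K,
          ((v (j-1) - v (j-2)) + 2*(v j - v (j-1)) + (v (j+1) - v j)) * (w j - w (j-1)))
      + (∑ j ∈ Finset.Icc (K+1) N, 4*(v j - v (j-1)) * (w j - w (j-1)))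
      + ((v (-K+1) - v (-K)) - 2*(v (-K) - v (-K-1)) + (v (-K-1) - v (-K-2))) * w (-K)
      - ((v (K+2) - v (K+1)) - 2*(v (K+1) - v K) + (v K - v (K-1))) * w K := by
  have hs1 := sum_split' (fun j =>
      (if -K ≤ j ∧ j ≤ K then -v (j+2) + 2*v j - v (j-2)
       else 4*(-v (j+1) + 2*v j - v (j-1))) * w j)
    (show (-N+1 : ℤ) - 1 ≤ -K-1 by omega) (show (-K-1 : ℤ) ≤ N-1 by omega)
  rw [show (-K-1+1 : ℤ) = -K by ring] at hs1
  have hs2 := sum_split' (fun j =>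
      (if -K ≤ j ∧ j ≤ K then -v (j+2) + 2*v j - v (j-2)
       else 4*(-v (j+1) + 2*v j - v (j-1))) * w j)
    (show (-K : ℤ) - 1 ≤ K by omega) (show (K : ℤ) ≤ N-1 by omega)
  have e1 : ∑ j ∈ Finset.Icc (-N+1) (-K-1),
      (if -K ≤ j ∧ j ≤ K then -v (j+2) + 2*v j - v (j-2)
       else 4*(-v (j+1) + 2*v j - v (j-1))) * w j
      = ∑ j ∈ Finset.Icc (-N+1) (-K-1), 4*(-v (j+1) + 2*v j - v (j-1)) * w j := by
    refine Finset.sum_congr rfl fun j hj => ?_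
    simp only [Finset.mem_Icc] at hj
    rw [if_neg (by omega)]
  have e2 : ∑ j ∈ Finset.Icc (-K) K,
      (if -K ≤ j ∧ j ≤ K then -v (j+2) + 2*v j - v (j-2)
       else 4*(-v (j+1) + 2*v j - v (j-1))) * w j
      = ∑ j ∈ Finset.Icc (-K) K, (-v (j+2) + 2*v j - v (j-2)) * w j := by
    refine Finset.sum_congr rfl fun j hj => ?_
    simp only [Finset.mem_Icc] at hj
    rw [if_pos (by omega)]
  have e3 : ∑ j ∈ Finset.Icc (K+1) (N-1),
      (if -K ≤ j ∧ j ≤ K then -v (j+2) + 2*v j - v (j-2)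
       else 4*(-v (j+1) + 2*v j - v (j-1))) * w j
      = ∑ j ∈ Finset.Icc (K+1) (N-1), 4*(-v (j+1) + 2*v j - v (j-1)) * w j := by
    refine Finset.sum_congr rfl fun j hj => ?_
    simp only [Finset.mem_Icc] at hj
    rw [if_neg (by omega)]
  have hL := abel' (fun j => 4*(v j - v (j-1))) w (-N+1) (-K) (by omega)
  have hM := abel' (fun j => (v (j-1) - v (j-2)) + 2*(v j - v (j-1)) + (v (j+1) - v j))
      w (-K+1) K (by omega)
  have hR := abel' (fun j => 4*(v j - v (j-1))) w (K+1) N (by omega)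
  beta_reduce at hs1 hs2 hL hM hR
  rw [show (-N+1-1 : ℤ) = -N by ring, hwL] at hL
  rw [show (-K+1-1 : ℤ) = -K by ring, show (-K+1-2 : ℤ) = -K-1 by ring,
    show (-K+1+1 : ℤ) = -K+2 by ring] at hM
  rw [show (K+1-1 : ℤ) = K by ring, hwR] at hR
  have p1 := sum_Icc_bot' (fun j => (-v (j+2) + 2*v j - v (j-2)) * w j)
      (show (-K : ℤ) ≤ K by omega)
  have p2 := sum_Icc_top' (fun j => (-v (j+2) + 2*v j - v (j-2)) * w j)
      (show (-K+1 : ℤ) ≤ K by omega)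
  beta_reduce at p1 p2
  have dL : ∑ j ∈ Finset.Icc (-N+1) (-K-1),
        (4*(v j - v (j-1)) - 4*(v (j+1) - v (j+1-1))) * w j
      = ∑ j ∈ Finset.Icc (-N+1) (-K-1), 4*(-v (j+1) + 2*v j - v (j-1)) * w j :=
    Finset.sum_congr rfl fun j _ => by ring_nf
  have dM : ∑ j ∈ Finset.Icc (-K+1) (K-1),
        ((v (j-1) - v (j-2) + 2*(v j - v (j-1)) + (v (j+1) - v j))
          - (v (j+1-1) - v (j+1-2) + 2*(v (j+1) - v (j+1-1)) + (v (j+1+1) - v (j+1)))) * w j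
      = ∑ j ∈ Finset.Icc (-K+1) (K-1), (-v (j+2) + 2*v j - v (j-2)) * w j :=
    Finset.sum_congr rfl fun j _ => by ring_nf
  have dR : ∑ j ∈ Finset.Icc (K+1) (N-1),
        (4*(v j - v (j-1)) - 4*(v (j+1) - v (j+1-1))) * w j
      = ∑ j ∈ Finset.Icc (K+1) (N-1), 4*(-v (j+1) + 2*v j - v (j-1)) * w j :=
    Finset.sum_congr rfl fun j _ => by ring_nf
  rw [dL] at hL
  rw [dM] at hM
  rw [dR] at hR
  linear_combination hs1 + hs2 + e1 + e2 + e3 - hL - hM - hR + p1 + p2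

set_option maxHeartbeats 4000000 in
/-- Weak (divergence) form of `L₂`: summation by parts with interface terms. -/
theorem L2_weak_form (N K : ℤ) (hN : 1 ≤ N) (hK0 : 0 < K) (hKN : K < N - 1)
    (v w : ℤ → ℝ) (hwL : w (-N) = 0) (hwR : w N = 0) :
    eps N * ∑ j ∈ Finset.Icc (-N+1) (N-1), L2op N K v j * w j =
      (∑ j ∈ Finset.Icc (-N+1) (-K), eps N * 4 * Dd N v j * Dd N w j)
      + (∑ j ∈ Finset.Icc (-K+1) K,
          eps N * (Dd N v (j-1) + 2 * Dd N v j + Dd N v (j+1)) * Dd N w j)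
      + (∑ j ∈ Finset.Icc (K+1) N, eps N * 4 * Dd N v j * Dd N w j)
      + (eps N)^2 * D3 N v (-K+1) * w (-K)
      - (eps N)^2 * D3 N v (K+2) * w K := by
  have hNpos : (0:ℝ) < (N:ℝ) := by exact_mod_cast (by omega : (0:ℤ) < N)
  have he : eps N ≠ 0 := by unfold eps; exact one_div_ne_zero (ne_of_gt hNpos)
  have hkey := keyid N K hN hK0 hKN v w hwL hwR
  have hc0 : eps N * ∑ j ∈ Finset.Icc (-N+1) (N-1), L2op N K v j * w j
      = (1/eps N) * ∑ j ∈ Finset.Icc (-N+1) (N-1),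
          (if -K ≤ j ∧ j ≤ K then -v (j+2) + 2*v j - v (j-2)
           else 4*(-v (j+1) + 2*v j - v (j-1))) * w j := by
    rw [Finset.mul_sum, Finset.mul_sum]
    refine Finset.sum_congr rfl fun j _ => ?_
    unfold L2op
    split <;> field_simp <;> ring
  have hc1 : ∑ j ∈ Finset.Icc (-N+1) (-K), eps N * 4 * Dd N v j * Dd N w j
      = (1/eps N) * ∑ j ∈ Finset.Icc (-N+1) (-K),
          4*(v j - v (j-1)) * (w j - w (j-1)) := by
    rw [Finset.mul_sum]
    refine Finset.sum_congr rfl fun j _ => ?_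
    unfold Dd; field_simp
  have hc2 : ∑ j ∈ Finset.Icc (-K+1) K,
        eps N * (Dd N v (j-1) + 2 * Dd N v j + Dd N v (j+1)) * Dd N w j
      = (1/eps N) * ∑ j ∈ Finset.Icc (-K+1) K,
          ((v (j-1) - v (j-2)) + 2*(v j - v (j-1)) + (v (j+1) - v j)) * (w j - w (j-1)) := by
    rw [Finset.mul_sum]
    refine Finset.sum_congr rfl fun j _ => ?_
    unfold Dd
    simp only [show (j-1-1:ℤ) = j - 2 from by ring]
    field_simp
    ring
  have hc3 : ∑ j ∈ Finset.Icc (K+1) N, eps N * 4 * Dd N v j * Dd N w j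
      = (1/eps N) * ∑ j ∈ Finset.Icc (K+1) N,
          4*(v j - v (j-1)) * (w j - w (j-1)) := by
    rw [Finset.mul_sum]
    refine Finset.sum_congr rfl fun j _ => ?_
    unfold Dd; field_simp
  have hc4 : (eps N)^2 * D3 N v (-K+1) * w (-K)
      = (1/eps N) * (((v (-K+1) - v (-K)) - 2*(v (-K) - v (-K-1))
          + (v (-K-1) - v (-K-2))) * w (-K)) := by
    unfold D3 Dd
    simp only [show (-K+1-1:ℤ) = -K from by ring, show (-K+1-2:ℤ) = -K-1 from by ring,
      show (-K-1-1:ℤ) = -K-2 from by ring]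
    field_simp
    all_goals ring
  have hc5 : (eps N)^2 * D3 N v (K+2) * w K
      = (1/eps N) * (((v (K+2) - v (K+1)) - 2*(v (K+1) - v K)
          + (v K - v (K-1))) * w K) := by
    unfold D3 Dd
    simp only [show (K+2-1:ℤ) = K+1 from by ring, show (K+2-2:ℤ) = K from by ring,
      show (K+1-1:ℤ) = K from by ring]
    field_simp
    all_goals ring
  linear_combination hc0 - hc1 - hc2 - hc3 - hc4 + hc5 + (1/eps N) * hkey
end
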